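/- arXiv:2603.21179 — 2 statements merged into one kernel-verified Lean document; each statement's English description precedes it below -/
import Mathlib

section
/- For every integer d ≥ 2 and every real number L₀ ≥ log d, there exists c ∈ ℂ such that the polynomial f(z) = z^d + c satisfies 𝓛_f = L₀ (equivalently, (d−1)·g_f(0) = L₀ − log d). In particular, the Lyapunov exponent map on degree-d complex polynomials is onto [log d, ∞). -/
open Polynomial

noncomputable section

/-- The `n`-th iterate `f^{∘n}` of a polynomial under composition, with `f^{∘0} = X`. -/
def iterComp {R : Type*} [CommSemiring R] (f : Polynomial R) : ℕ → Polynomial R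
  | 0 => Polynomial.X
  | n + 1 => f.comp (iterComp f n)

/-- Two polynomials `f` and `g` are intertwined if there are an integer `n ≥ 1` and
nonconstant polynomials `S, h₁, h₂` with `f^{∘n} ∘ h₁ = h₁ ∘ S` and `g^{∘n} ∘ h₂ = h₂ ∘ S`. -/
def Intertwined {R : Type*} [CommSemiring R] (f g : Polynomial R) : Prop :=
  ∃ (n : ℕ) (S h₁ h₂ : Polynomial R),
    0 < n ∧ 0 < S.natDegree ∧ 0 < h₁.natDegree ∧ 0 < h₂.natDegree ∧
    (iterComp f n).comp h₁ = h₁.comp S ∧ (iterComp g n).comp h₂ = h₂.comp S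

/-- The forward orbit of `z` under a complex polynomial `f` is bounded;
equivalently, `z` lies in the filled Julia set `K(f)`. -/
def BoundedOrbit (f : Polynomial ℂ) (z : ℂ) : Prop :=
  ∃ M : ℝ, ∀ n : ℕ, ‖(fun w => f.eval w)^[n] z‖ ≤ M

/-- The Green function (escape-rate function) of a polynomial `f` of degree `d ≥ 2`:
`g_f(z) = lim_{n→∞} d^{-n} log⁺ |f^{∘n}(z)|`. -/
def greenFn (f : Polynomial ℂ) (z : ℂ) : ℝ :=
  Filter.limUnder Filter.atTop fun n : ℕ =>
    ((f.natDegree : ℝ) ^ n)⁻¹ * Real.log (max 1 ‖(fun w => f.eval w)^[n] z‖)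

/-- The Lyapunov exponent of `f` given by Przytycki's formula:
`𝓛_f = log d + Σ_c g_f(c)`, summing over the roots of `f'` with multiplicity. -/
def lyap (f : Polynomial ℂ) : ℝ :=
  Real.log (f.natDegree : ℝ) + (f.derivative.roots.map (greenFn f)).sum

/-- The polynomial obtained by applying complex conjugation to every coefficient of `f`. -/
def conjPoly (f : Polynomial ℂ) : Polynomial ℂ := f.map (starRingEnd ℂ)

/-- `f` and `g` are affinely conjugate: `f ∘ L = L ∘ g` for an affine map `L(z) = az + b`, `a ≠ 0`. -/
def AffineConj {K : Type*} [Field K] (f g : Polynomial K) : Prop :=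
  ∃ a b : K, a ≠ 0 ∧ f.comp (C a * X + C b) = (C a * X + C b).comp g

/-- `T` is the normalized degree-`d` Chebyshev polynomial: the monic polynomial of degree `d`
satisfying `T(z + z⁻¹) = z^d + z^{-d}`. -/
def IsNormalizedChebyshev {K : Type*} [Field K] (d : ℕ) (T : Polynomial K) : Prop :=
  T.Monic ∧ T.natDegree = d ∧ ∀ z : K, z ≠ 0 → T.eval (z + z⁻¹) = z ^ d + (z⁻¹) ^ d

/-- A polynomial of degree `d` is exceptional if it is affinely conjugate to `z^d` or to `±T_d`. -/
def Exceptional {K : Type*} [Field K] (d : ℕ) (f : Polynomial K) : Prop :=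
  AffineConj f (X ^ d) ∨
    ∃ T : Polynomial K, IsNormalizedChebyshev d T ∧ (AffineConj f T ∨ AffineConj f (-T))

/-- A fixed algebraic closure `ℚ̄` of `ℚ`. -/
abbrev Qbar := AlgebraicClosure ℚ

/-- The least common multiple of the denominators of the coefficients of a rational polynomial. -/
def denomLcm (p : Polynomial ℚ) : ℕ :=
  (Finset.range (p.natDegree + 1)).lcm fun i => (p.coeff i).den

/-- The absolute logarithmic Weil height of an algebraic number `x ∈ ℚ̄`, via the Mahler-measure
formula: `h(x) = (1/n) log (D ∏ᵢ max(1,|xᵢ|))` where `n` is the degree of the minimal polynomial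
of `x` over `ℚ`, `D` is the lcm of the denominators of its coefficients (so that `D·minpoly` is
the primitive integer minimal polynomial), and the `xᵢ` are the complex conjugates of `x`. -/
def weilHeight (x : Qbar) : ℝ :=
  ((minpoly ℚ x).natDegree : ℝ)⁻¹ *
    Real.log ((denomLcm (minpoly ℚ x) : ℝ) *
      (((minpoly ℚ x).map (algebraMap ℚ ℂ)).roots.map fun α => max 1 ‖α‖).prod)

/-- The canonical height `ĥ_f(a) = lim_{n→∞} d^{-n} h(f^{∘n}(a))` of `a ∈ ℚ̄` for a polynomial
`f ∈ ℚ̄[z]` of degree `d ≥ 2`. -/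
def canHeight (f : Polynomial Qbar) (a : Qbar) : ℝ :=
  Filter.limUnder Filter.atTop fun n : ℕ =>
    ((f.natDegree : ℝ) ^ n)⁻¹ * weilHeight ((fun w => f.eval w)^[n] a)

/-- The critical height `ĥ_crit(f) = Σ_c ĥ_f(c)`, summing over the roots of `f'` in `ℚ̄`
counted with multiplicity. -/
def critHeight (f : Polynomial Qbar) : ℝ :=
  (f.derivative.roots.map (canHeight f)).sum

end


noncomputable section LyapSurjAux
namespace LyapSurjAux
open Filter Topology


/-- orbit of 0 under z^d + c -/
def orb (d : ℕ) (c : ℂ) (n : ℕ) : ℂ := (fun w => w ^ d + c)^[n] 0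

def u (d : ℕ) (c : ℂ) (n : ℕ) : ℝ :=
  ((d : ℝ) ^ n)⁻¹ * Real.log (max 1 (‖orb d c n‖))

def Lb (c : ℂ) : ℝ := Real.log (2 * max 1 (‖c‖))

lemma logplus_step (d : ℕ) (hd : 2 ≤ d) (c w : ℂ) :
    |Real.log (max 1 (‖w ^ d + c‖)) - d * Real.log (max 1 (‖w‖))|
      ≤ Lb c := by
  set A := max 1 (‖w‖) with hA
  set K := 2 * max 1 (‖c‖) with hKdef
  have hA1 : 1 ≤ A := le_max_left _ _
  have hA0 : (0:ℝ) < A := lt_of_lt_of_le one_pos hA1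
  have hK2 : (2:ℝ) ≤ K := by
    have : (1:ℝ) ≤ max 1 (‖c‖) := le_max_left _ _
    nlinarith
  have hK1 : (1:ℝ) ≤ K := by linarith
  have hK0 : (0:ℝ) < K := by linarith
  have hLb : Lb c = Real.log K := rfl
  have habsw : ‖w‖ ≤ A := le_max_right _ _
  have hcK : ‖c‖ ≤ K / 2 := by
    have : ‖c‖ ≤ max 1 (‖c‖) := le_max_right _ _
    linarith
  rw [hLb, abs_le]
  constructor
  · -- lower bound
    by_cases hcase : A ^ d ≤ K
    · have h1 : (d:ℝ) * Real.log A ≤ Real.log K := by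
        rw [← Real.log_pow]
        exact Real.log_le_log (by positivity) hcase
      have h2 : 0 ≤ Real.log (max 1 (‖w ^ d + c‖)) :=
        Real.log_nonneg (le_max_left _ _)
      linarith
    · push_neg at hcase
      have hw1 : 1 ≤ ‖w‖ := by
        by_contra h
        push_neg at h
        have : A = 1 := max_eq_left h.le
        rw [this, one_pow] at hcase
        linarith
      have hAw : A = ‖w‖ := max_eq_right hw1
      have hlow : A ^ d / 2 ≤ ‖w ^ d + c‖ := by
        have h1 : ‖w ^ d‖ = A ^ d := by rw [norm_pow, hAw]
        have h2 : ‖w ^ d‖ - ‖c‖ ≤ ‖w ^ d + c‖ := by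
          have h3 : ‖w ^ d‖ ≤ ‖w ^ d + c‖ + ‖c‖ := by
            calc ‖w ^ d‖ = ‖(w ^ d + c) + (-c)‖ := by ring_nf
            _ ≤ ‖w ^ d + c‖ + ‖-c‖ := norm_add_le _ _
            _ = ‖w ^ d + c‖ + ‖c‖ := by rw [norm_neg]
          linarith
        nlinarith
      have h1lt : (1:ℝ) ≤ A ^ d / 2 := by nlinarith
      have hmax : A ^ d / 2 ≤ max 1 (‖w ^ d + c‖) :=
        le_trans hlow (le_max_right _ _)
      have := Real.log_le_log (by positivity) hmax
      rw [Real.log_div (by positivity) (by norm_num), Real.log_pow] at this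
      have hlog2K : Real.log 2 ≤ Real.log K := Real.log_le_log (by norm_num) hK2
      linarith
  · -- upper bound
    have hub : ‖w ^ d + c‖ ≤ A ^ d * K := by
      have h1 : ‖w ^ d + c‖ ≤ ‖w‖ ^ d + ‖c‖ := by
        calc ‖w ^ d + c‖ ≤ ‖w ^ d‖ + ‖c‖ :=
              norm_add_le _ _
        _ = ‖w‖ ^ d + ‖c‖ := by rw [norm_pow]
      have h2 : ‖w‖ ^ d ≤ A ^ d :=
        pow_le_pow_left₀ (norm_nonneg w) habsw d
      have hAd1 : (1:ℝ) ≤ A ^ d := one_le_pow₀ hA1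
      nlinarith
    have hmax : max 1 (‖w ^ d + c‖) ≤ A ^ d * K :=
      max_le (by nlinarith [one_le_pow₀ hA1 (n := d)]) hub
    have := Real.log_le_log (by positivity) hmax
    rw [Real.log_mul (by positivity) (by positivity), Real.log_pow] at this
    linarith



lemma Lb_nonneg (c : ℂ) : 0 ≤ Lb c :=
  Real.log_nonneg (by nlinarith [le_max_left 1 (‖c‖)])

lemma orb_succ (d : ℕ) (c : ℂ) (n : ℕ) : orb d c (n + 1) = (orb d c n) ^ d + c := by
  simp [orb, Function.iterate_succ_apply']

lemma u_dist_succ (d : ℕ) (hd : 2 ≤ d) (c : ℂ) (n : ℕ) :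
    dist (u d c n) (u d c (n + 1)) ≤ (Lb c / d) * (1 / (d:ℝ)) ^ n := by
  have hd0 : (0:ℝ) < d := by exact_mod_cast (by omega : 0 < d)
  set X := Real.log (max 1 (‖orb d c (n + 1)‖)) with hX
  set Y := Real.log (max 1 (‖orb d c n‖)) with hY
  have hdiff : u d c n - u d c (n + 1) = ((d:ℝ) ^ (n + 1))⁻¹ * ((d:ℝ) * Y - X) := by
    have h1 : ((d:ℝ) ^ n)⁻¹ = (d:ℝ) * ((d:ℝ) ^ (n + 1))⁻¹ := by
      rw [pow_succ]
      field_simp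
    simp only [u, ← hX, ← hY]
    rw [h1]; ring
  have hkey : |X - (d:ℝ) * Y| ≤ Lb c := by
    have := logplus_step d hd c (orb d c n)
    rwa [← orb_succ] at this
  rw [Real.dist_eq, hdiff, abs_mul, abs_of_nonneg (by positivity)]
  have h2 : |(d:ℝ) * Y - X| ≤ Lb c := by rwa [abs_sub_comm] at hkey
  have h3 : ((d:ℝ) ^ (n + 1))⁻¹ * |(d:ℝ) * Y - X| ≤ ((d:ℝ) ^ (n + 1))⁻¹ * Lb c :=
    mul_le_mul_of_nonneg_left h2 (by positivity)
  refine h3.trans (le_of_eq ?_)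
  rw [pow_succ, mul_inv, one_div, inv_pow]
  ring

lemma cauchy_u (d : ℕ) (hd : 2 ≤ d) (c : ℂ) : CauchySeq (u d c) := by
  have hd0 : (0:ℝ) < d := by exact_mod_cast (by omega : 0 < d)
  exact cauchySeq_of_le_geometric (1 / (d:ℝ)) (Lb c / d)
    (by rw [div_lt_one hd0]; exact_mod_cast (by omega : 1 < d)) (u_dist_succ d hd c)

def G (d : ℕ) (c : ℂ) : ℝ := limUnder atTop (u d c)

lemma tendsto_u (d : ℕ) (hd : 2 ≤ d) (c : ℂ) : Tendsto (u d c) atTop (𝓝 (G d c)) :=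
  (cauchy_u d hd c).tendsto_limUnder

lemma dist_u_G (d : ℕ) (hd : 2 ≤ d) (c : ℂ) (n : ℕ) :
    dist (u d c n) (G d c) ≤ Lb c * (1 / (d:ℝ)) ^ n := by
  have hd0 : (0:ℝ) < d := by exact_mod_cast (by omega : 0 < d)
  have hd2 : (2:ℝ) ≤ d := by exact_mod_cast hd
  have h := dist_le_of_le_geometric_of_tendsto (1 / (d:ℝ)) (Lb c / d)
    (by rw [div_lt_one hd0]; exact_mod_cast (by omega : 1 < d)) (u_dist_succ d hd c)
    (tendsto_u d hd c) n
  refine h.trans ?_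
  have h1 : (0:ℝ) < 1 - 1 / d := by
    rw [sub_pos, div_lt_one hd0]; exact_mod_cast (by omega : 1 < d)
  rw [div_le_iff₀ h1]
  have hpow : (0:ℝ) ≤ (1 / (d:ℝ)) ^ n := by positivity
  have hLbn := Lb_nonneg c
  have : (1:ℝ) / 2 ≤ 1 - 1 / d := by
    rw [le_sub_iff_add_le]
    have : (1:ℝ) / d ≤ 1 / 2 := by
      apply div_le_div_of_nonneg_left (by norm_num) (by norm_num) hd2
    linarith
  have h4 : (1:ℝ) / d ≤ 1 - 1 / d := by
    have h5 : (1:ℝ) / d ≤ 1 / 2 := by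
      apply div_le_div_of_nonneg_left (by norm_num) (by norm_num) hd2
    linarith
  have h5 : Lb c * (1 / (d:ℝ)) ≤ Lb c * (1 - 1 / d) := mul_le_mul_of_nonneg_left h4 hLbn
  calc Lb c / d * (1 / (d:ℝ)) ^ n = Lb c * (1 / (d:ℝ)) * (1 / (d:ℝ)) ^ n := by ring
  _ ≤ Lb c * (1 - 1 / d) * (1 / (d:ℝ)) ^ n := mul_le_mul_of_nonneg_right h5 hpow
  _ = Lb c * (1 / (d:ℝ)) ^ n * (1 - 1 / d) := by ring

lemma continuous_orb (d : ℕ) (n : ℕ) : Continuous (fun c => orb d c n) := by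
  induction n with
  | zero => simpa [orb] using continuous_const
  | succ n ih =>
    have : (fun c => orb d c (n + 1)) = fun c => (orb d c n) ^ d + c := by
      funext c; exact orb_succ d c n
    rw [this]
    exact (ih.pow d).add continuous_id

lemma continuous_u (d : ℕ) (n : ℕ) : Continuous (fun c => u d c n) := by
  apply Continuous.mul continuous_const
  apply Continuous.log
  · exact continuous_const.max (continuous_norm.comp (continuous_orb d n))
  · intro c
    have : (1:ℝ) ≤ max 1 (‖orb d c n‖) := le_max_left _ _
    linarith

lemma continuous_G (d : ℕ) (hd : 2 ≤ d) : Continuous (G d) := by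
  rw [continuous_iff_continuousAt]
  intro c₀
  refine ContinuousOn.continuousAt ?_ (Metric.ball_mem_nhds c₀ one_pos)
  set M : ℝ := Real.log (2 * (‖c₀‖ + 2)) with hM
  have hMb : ∀ c ∈ Metric.ball c₀ 1, Lb c ≤ M := by
    intro c hc
    rw [Metric.mem_ball, Complex.dist_eq] at hc
    have h1 : ‖c‖ ≤ ‖c₀‖ + 1 := by
      have := norm_sub_le c c₀
      have h2 := norm_add_le (c - c₀) c₀
      simp at h2
      linarith [h2]
    apply Real.log_le_log (by positivity)
    have : max 1 (‖c‖) ≤ ‖c₀‖ + 2 := by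
      apply max_le
      · linarith [norm_nonneg c₀]
      · linarith
    linarith
  have htu : TendstoUniformlyOn (fun n c => u d c n) (G d) atTop (Metric.ball c₀ 1) := by
    rw [Metric.tendstoUniformlyOn_iff]
    intro ε hε
    have hd0 : (0:ℝ) < d := by exact_mod_cast (by omega : 0 < d)
    have hlim : Tendsto (fun n : ℕ => M * (1 / (d:ℝ)) ^ n) atTop (𝓝 0) := by
      have : Tendsto (fun n : ℕ => (1 / (d:ℝ)) ^ n) atTop (𝓝 0) := by
        apply tendsto_pow_atTop_nhds_zero_of_lt_one (by positivity)
        rw [div_lt_one hd0]; exact_mod_cast (by omega : 1 < d)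
      simpa using this.const_mul M
    filter_upwards [hlim.eventually (gt_mem_nhds hε)] with n hn c hc
    have h1 := dist_u_G d hd c n
    have h2 : Lb c * (1 / (d:ℝ)) ^ n ≤ M * (1 / (d:ℝ)) ^ n :=
      mul_le_mul_of_nonneg_right (hMb c hc) (by positivity)
    calc dist (G d c) (u d c n) = dist (u d c n) (G d c) := dist_comm _ _
    _ ≤ M * (1 / (d:ℝ)) ^ n := h1.trans h2
    _ < ε := hn
  apply htu.continuousOn
  exact Filter.Frequently.of_forall fun n => (continuous_u d n).continuousOn

lemma G_zero (d : ℕ) (hd : 2 ≤ d) : G d 0 = 0 := by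
  have horb : ∀ n, orb d 0 n = 0 := by
    intro n
    induction n with
    | zero => simp [orb]
    | succ n ih => rw [orb_succ, ih, zero_pow (by omega : d ≠ 0)]; simp
  have hu : u d 0 = fun _ => (0:ℝ) := by
    funext n
    simp [u, horb n]
  rw [G, hu]
  exact Filter.Tendsto.limUnder_eq tendsto_const_nhds

lemma orb_real (d : ℕ) (hd : 2 ≤ d) (x : ℝ) (hx : 2 ≤ x) (n : ℕ) :
    ∃ y : ℝ, orb d (x:ℂ) (n + 1) = (y:ℂ) ∧ x ^ d ^ n ≤ y := by
  induction n with
  | zero =>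
    refine ⟨x, ?_, by simp⟩
    rw [orb_succ]
    simp [orb, zero_pow (by omega : d ≠ 0)]
  | succ n ih =>
    obtain ⟨y, hy, hyx⟩ := ih
    have hy0 : (0:ℝ) ≤ x ^ d ^ n := by positivity
    refine ⟨y ^ d + x, ?_, ?_⟩
    · rw [orb_succ, hy]
      push_cast
      ring
    · have h1 : x ^ d ^ (n + 1) = (x ^ d ^ n) ^ d := by
        rw [← pow_mul, pow_succ]
      rw [h1]
      have h2 : (x ^ d ^ n) ^ d ≤ y ^ d := pow_le_pow_left₀ hy0 hyx d
      linarith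

lemma u_lower (d : ℕ) (hd : 2 ≤ d) (x : ℝ) (hx : 2 ≤ x) (n : ℕ) :
    Real.log x / d ≤ u d (x:ℂ) (n + 1) := by
  have hd0 : (0:ℝ) < d := by exact_mod_cast (by omega : 0 < d)
  obtain ⟨y, hy, hyx⟩ := orb_real d hd x hx n
  have hxpow : (1:ℝ) ≤ x ^ d ^ n := one_le_pow₀ (by linarith)
  have hy1 : (1:ℝ) ≤ y := hxpow.trans hyx
  rw [u, hy]
  rw [Complex.norm_real, Real.norm_eq_abs, abs_of_nonneg (by linarith), max_eq_right hy1]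
  have hlog : ((d:ℝ) ^ n) * Real.log x ≤ Real.log y := by
    have := Real.log_le_log (by positivity) hyx
    rw [Real.log_pow] at this
    calc ((d:ℝ) ^ n) * Real.log x = ((d ^ n : ℕ) : ℝ) * Real.log x := by push_cast; ring
    _ ≤ Real.log y := this
  have h2 : ((d:ℝ) ^ (n + 1))⁻¹ * (((d:ℝ) ^ n) * Real.log x) ≤
      ((d:ℝ) ^ (n + 1))⁻¹ * Real.log y :=
    mul_le_mul_of_nonneg_left hlog (by positivity)
  refine le_trans (le_of_eq ?_) h2
  rw [pow_succ]
  field_simp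

lemma G_lower (d : ℕ) (hd : 2 ≤ d) (x : ℝ) (hx : 2 ≤ x) :
    Real.log x / d ≤ G d (x:ℂ) := by
  apply ge_of_tendsto (tendsto_u d hd (x:ℂ))
  filter_upwards [eventually_ge_atTop 1] with n hn
  obtain ⟨m, rfl⟩ := Nat.exists_eq_add_of_le hn
  rw [add_comm 1 m]
  exact u_lower d hd x hx m


end LyapSurjAux
end LyapSurjAux

open Filter Topology LyapSurjAux

lemma greenFn_eq_G (d : ℕ) (hd : 2 ≤ d) (c : ℂ) :
    greenFn (X ^ d + C c) 0 = G d c := by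
  have hdeg : (X ^ d + C c).natDegree = d := natDegree_X_pow_add_C
  have heval : (fun w => (X ^ d + C c).eval w) = fun w => w ^ d + c := by
    funext w
    simp
  unfold greenFn G u orb
  rw [hdeg, heval]

lemma lyap_eq (d : ℕ) (hd : 2 ≤ d) (c : ℂ) :
    lyap (X ^ d + C c) = Real.log d + ((d:ℝ) - 1) * G d c := by
  have hdeg : (X ^ d + C c).natDegree = d := natDegree_X_pow_add_C
  have hderiv : derivative (X ^ d + C c) = C (d:ℂ) * X ^ (d - 1) := by
    rw [derivative_add, derivative_C, derivative_X_pow, add_zero]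
  have hdne : (d:ℂ) ≠ 0 := by
    exact_mod_cast Nat.cast_ne_zero.mpr (by omega : d ≠ 0)
  have hroots : (derivative (X ^ d + C c)).roots = Multiset.replicate (d - 1) 0 := by
    rw [hderiv, roots_C_mul_X_pow hdne]
    rw [Multiset.nsmul_singleton]
  rw [lyap, hdeg, hroots, Multiset.map_replicate, Multiset.sum_replicate,
    greenFn_eq_G d hd c, nsmul_eq_mul]
  have : ((d - 1 : ℕ) : ℝ) = (d:ℝ) - 1 := by
    rw [Nat.cast_sub (by omega : 1 ≤ d), Nat.cast_one]
  rw [this]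

/-- For every `d ≥ 2` and every real `L₀ ≥ log d`, there is `c ∈ ℂ` such that
`f(z) = z^d + c` has `𝓛_f = L₀` (equivalently `(d-1)·g_f(0) = L₀ - log d`). -/
theorem lyap_surjective_unicritical (d : ℕ) (hd : 2 ≤ d) (L₀ : ℝ)
    (hL : Real.log (d : ℝ) ≤ L₀) :
    ∃ c : ℂ, lyap (X ^ d + C c) = L₀ ∧
      ((d : ℝ) - 1) * greenFn (X ^ d + C c) 0 = L₀ - Real.log (d : ℝ) := by
  have hd0 : (0:ℝ) < d := by exact_mod_cast (by omega : 0 < d)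
  have hd1 : (0:ℝ) < (d:ℝ) - 1 := by
    have : (2:ℝ) ≤ d := by exact_mod_cast hd
    linarith
  set t : ℝ := (L₀ - Real.log d) / ((d:ℝ) - 1) with ht
  have ht0 : 0 ≤ t := div_nonneg (by linarith) hd1.le
  set R : ℝ := max 2 (Real.exp ((d:ℝ) * t)) with hR
  have hR2 : (2:ℝ) ≤ R := le_max_left _ _
  have hRt : t ≤ Real.log R / d := by
    rw [le_div_iff₀ hd0]
    have h1 : Real.exp ((d:ℝ) * t) ≤ R := le_max_right _ _
    have h2 : (d:ℝ) * t = Real.log (Real.exp ((d:ℝ) * t)) := (Real.log_exp _).symm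
    rw [mul_comm, h2]
    exact Real.log_le_log (Real.exp_pos _) h1
  -- IVT on φ x = G d (x : ℂ)
  have hφ : Continuous fun x : ℝ => G d (x:ℂ) :=
    (continuous_G d hd).comp Complex.continuous_ofReal
  have hIVT := intermediate_value_Icc (by linarith : (0:ℝ) ≤ R) hφ.continuousOn
  have htmem : t ∈ Set.Icc (G d ((0:ℝ):ℂ)) (G d ((R:ℝ):ℂ)) := by
    constructor
    · rw [show ((0:ℝ):ℂ) = 0 by norm_num, G_zero d hd]; exact ht0
    · exact hRt.trans (G_lower d hd R hR2)
  obtain ⟨x, _, hx⟩ := hIVT htmem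
  simp only at hx
  refine ⟨(x:ℂ), ?_, ?_⟩
  · rw [lyap_eq d hd, hx, ht, mul_div_cancel₀ _ (ne_of_gt hd1)]
    ring
  · rw [greenFn_eq_G d hd, hx, ht, mul_div_cancel₀ _ (ne_of_gt hd1)]
end

section
/- For every integer d ≥ 2, the polynomials z^d and T_d (the unique monic polynomial of degree d with T_d(z + z⁻¹) = z^d + z^{−d}) are not intertwined; in particular they satisfy the semiconjugacy T_d(w + w⁻¹) = w^d + w^{−d} for all w ∈ ℂ \ {0}, yet no relation f^{∘n} ∘ h₁ = h₁ ∘ R, g^{∘n} ∘ h₂ = h₂ ∘ R with nonconstant polynomials R, h₁, h₂ ∈ ℂ[z] and n ≥ 1 holds for f = z^d, g = T_d. -/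
open Polynomial

lemma iterComp_X_pow (d n : ℕ) : iterComp (X ^ d : Polynomial ℂ) n = X ^ (d ^ n) := by
  induction n with
  | zero => simp [iterComp]
  | succ n ih =>
      show (X ^ d : Polynomial ℂ).comp (iterComp (X ^ d) n) = _
      rw [ih, X_pow_comp, ← pow_mul, ← pow_succ]

lemma cheb_iter {d : ℕ} (hd : 0 < d) {T : Polynomial ℂ} (hT : IsNormalizedChebyshev d T)
    (n : ℕ) :
    (iterComp T n).Monic ∧ (iterComp T n).natDegree = d ^ n ∧
      ∀ z : ℂ, z ≠ 0 → (iterComp T n).eval (z + z⁻¹) = z ^ (d ^ n) + (z⁻¹) ^ (d ^ n) := by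
  induction n with
  | zero =>
      refine ⟨monic_X, natDegree_X, ?_⟩
      intro z hz; simp [iterComp]
  | succ n ih =>
      obtain ⟨hm, hdeg, hfun⟩ := ih
      have hne : (iterComp T n).natDegree ≠ 0 := by
        rw [hdeg]; positivity
      refine ⟨hT.1.comp hm hne, ?_, ?_⟩
      · show (T.comp (iterComp T n)).natDegree = _
        rw [natDegree_comp, hT.2.1, hdeg, mul_comm, ← pow_succ]
      · intro z hz
        show (T.comp (iterComp T n)).eval (z + z⁻¹) = _
        rw [eval_comp, hfun z hz]
        have hzn : z ^ (d ^ n) ≠ 0 := pow_ne_zero _ hz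
        have h1 : (z⁻¹) ^ (d ^ n) = (z ^ (d ^ n))⁻¹ := by rw [inv_pow]
        rw [h1, hT.2.2 _ hzn, ← pow_mul, ← pow_succ, ← inv_pow, ← pow_mul, ← pow_succ]

/-- If `(X-Cα)^j * A = (X-Cα)^k * B` with `A(α) ≠ 0` then `k ≤ j`. -/
lemma aux_pow_le {α : ℂ} {j k : ℕ} {A B : Polynomial ℂ}
    (h : (X - C α) ^ j * A = (X - C α) ^ k * B) (hA : A.eval α ≠ 0) : k ≤ j := by
  by_contra h'
  push_neg at h'
  rw [show k = j + (k - j) by omega, pow_add, mul_assoc] at h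
  have h2 := mul_left_cancel₀ (pow_ne_zero j (X_sub_C_ne_zero α)) h
  apply hA
  rw [h2]
  simp [zero_pow (show k - j ≠ 0 by omega)]


/-- For every `d ≥ 2`, the polynomials `z^d` and the normalized Chebyshev
polynomial `T_d` (the monic degree-`d` polynomial with `T_d(z + z⁻¹) = z^d + z^{-d}` for all
`z ≠ 0`) are not intertwined. -/
theorem pow_not_intertwined_chebyshev (d : ℕ) (hd : 2 ≤ d) (T : Polynomial ℂ)
    (hT : IsNormalizedChebyshev d T) :
    ¬ Intertwined (X ^ d : Polynomial ℂ) T := by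
  rintro ⟨n, S, h₁, h₂, hn, hSpos, hh₁, hh₂, e₁, e₂⟩
  set D := d ^ n with hDdef
  have hD2 : 2 ≤ D := le_trans hd (Nat.le_self_pow hn.ne' d)
  have hD0 : D ≠ 0 := by omega
  -- first equation
  rw [iterComp_X_pow, X_pow_comp] at e₁
  -- e₁ : h₁ ^ D = h₁.comp S
  have hh₁0 : h₁ ≠ 0 := fun h => by simp [h] at hh₁
  have hSdegD : S.natDegree = D := by
    have h := congrArg natDegree e₁
    rw [natDegree_pow, natDegree_comp, mul_comm D] at h
    exact (Nat.eq_of_mul_eq_mul_left hh₁ h).symm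
  have hS0 : S ≠ 0 := fun h => by rw [h] at hSpos; simp at hSpos
  have hdegS : 0 < S.degree := natDegree_pos_iff_degree_pos.mp hSpos
  have heval1 : ∀ z : ℂ, h₁.eval (S.eval z) = (h₁.eval z) ^ D := by
    intro z
    have h := congrArg (eval z) e₁
    rw [eval_pow, eval_comp] at h
    exact h.symm
  have hroot : ∀ z : ℂ, h₁.eval (S.eval z) = 0 ↔ h₁.eval z = 0 := by
    intro z
    rw [heval1]
    exact pow_eq_zero_iff hD0
  set Z : Finset ℂ := h₁.roots.toFinset with hZdef
  have hmemZ : ∀ z : ℂ, z ∈ Z ↔ h₁.eval z = 0 := by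
    intro z
    rw [hZdef, Multiset.mem_toFinset, mem_roots hh₁0]
    exact ⟨fun h => h, fun h => h⟩
  have hmaps : ∀ z ∈ Z, S.eval z ∈ Z := by
    intro z hz
    rw [hmemZ] at hz ⊢
    rw [heval1, hz]
    simp [zero_pow hD0]
  have hfibex : ∀ w ∈ Z, ∃ z ∈ Z, S.eval z = w := by
    intro w hw
    obtain ⟨z, hz⟩ := Complex.exists_root (f := S - C w)
      (by rw [degree_sub_C hdegS]; exact hdegS)
    have hz' : S.eval z = w := by
      have := hz
      simp only [IsRoot, eval_sub, eval_C, sub_eq_zero] at this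
      exact this
    refine ⟨z, ?_, hz'⟩
    rw [hmemZ, ← (hroot z), hz']
    exact (hmemZ w).mp hw
  have hcard : Z.card = ∑ w ∈ Z, (Z.filter fun z => S.eval z = w).card :=
    Finset.card_eq_sum_card_fiberwise hmaps
  have hfib1 : ∀ w ∈ Z, (Z.filter fun z => S.eval z = w).card = 1 := by
    by_contra hcon
    push_neg at hcon
    obtain ⟨w₀, hw₀, hne⟩ := hcon
    have hge : ∀ w ∈ Z, 1 ≤ (Z.filter fun z => S.eval z = w).card := by
      intro w hw
      obtain ⟨z, hz, hz'⟩ := hfibex w hw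
      exact Finset.card_pos.mpr ⟨z, Finset.mem_filter.mpr ⟨hz, hz'⟩⟩
    have hlt : ∑ w ∈ Z, 1 < ∑ w ∈ Z, (Z.filter fun z => S.eval z = w).card := by
      refine Finset.sum_lt_sum hge ⟨w₀, hw₀, ?_⟩
      have := hge w₀ hw₀
      omega
    rw [Finset.sum_const, smul_eq_mul, mul_one] at hlt
    omega
  set c : ℂ := S.leadingCoeff with hcdef
  have hc0 : c ≠ 0 := leadingCoeff_ne_zero.mpr hS0
  have hsingle : ∀ w ∈ Z, ∃ a ∈ Z, S - C w = C c * (X - C a) ^ D ∧ S.eval a = w := by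
    intro w hw
    obtain ⟨a, ha⟩ := Finset.card_eq_one.mp (hfib1 w hw)
    have haZ : a ∈ Z ∧ S.eval a = w := by
      have : a ∈ Z.filter fun z => S.eval z = w := by rw [ha]; simp
      exact Finset.mem_filter.mp this
    have hsw0 : S - C w ≠ 0 := by
      intro h
      have := congrArg natDegree h
      rw [natDegree_sub_C, hSdegD] at this
      simp at this
      omega
    have hsp : Splits (S - C w) := IsAlgClosed.splits _
    have hcr : (S - C w).roots.card = D := by
      rw [splits_iff_card_roots.mp hsp, natDegree_sub_C, hSdegD]
    have hall : ∀ b ∈ (S - C w).roots, b = a := by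
      intro b hb
      rw [mem_roots hsw0] at hb
      have hb' : S.eval b = w := by
        have := hb
        simp only [IsRoot, eval_sub, eval_C, sub_eq_zero] at this
        exact this
      have hbZ : b ∈ Z := by
        rw [hmemZ, ← (hroot b), hb']
        exact (hmemZ w).mp hw
      have : b ∈ Z.filter fun z => S.eval z = w := Finset.mem_filter.mpr ⟨hbZ, hb'⟩
      rw [ha] at this
      simpa using this
    have hrep : (S - C w).roots = Multiset.replicate D a :=
      Multiset.eq_replicate.mpr ⟨hcr, hall⟩
    have heqp := hsp.eq_prod_roots
    rw [hrep, Multiset.map_replicate, Multiset.prod_replicate] at heqp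
    have hlc : (S - C w).leadingCoeff = c := by
      rw [sub_eq_neg_add, leadingCoeff_add_of_degree_lt]
      calc degree (-C w) = degree (C w) := degree_neg _
        _ ≤ 0 := degree_C_le
        _ < S.degree := hdegS
    rw [hlc] at heqp
    exact ⟨a, haZ.1, heqp, haZ.2⟩
  -- Z has exactly one element
  have hZone : ∀ w₁ ∈ Z, ∀ w₂ ∈ Z, w₁ = w₂ := by
    intro w₁ hw₁ w₂ hw₂
    obtain ⟨a, _, ha, haw⟩ := hsingle w₁ hw₁
    obtain ⟨b, _, hb, hbw⟩ := hsingle w₂ hw₂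
    have hsub : C c * (X - C a) ^ D - C c * (X - C b) ^ D = C w₂ - C w₁ := by
      rw [← ha, ← hb]; ring
    have hder := congrArg derivative hsub
    rw [derivative_sub, derivative_sub, derivative_C, derivative_C, sub_zero,
      derivative_C_mul, derivative_C_mul, derivative_X_sub_C_pow,
      derivative_X_sub_C_pow, sub_eq_zero] at hder
    have hcD : (C c * C (D : ℂ)) ≠ 0 := by
      apply mul_ne_zero <;> rw [Ne, C_eq_zero]
      · exact hc0
      · exact_mod_cast hD0
    have heq2 : (X - C a) ^ (D - 1) = (X - C b) ^ (D - 1) := by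
      apply mul_left_cancel₀ hcD
      rw [mul_assoc, mul_assoc]
      exact hder
    have hab : a = b := by
      have := congrArg (eval a) heq2
      rw [eval_pow, eval_pow, eval_sub, eval_sub, eval_X, eval_C, eval_C, sub_self,
        zero_pow (show D - 1 ≠ 0 by omega)] at this
      have := (pow_eq_zero_iff (show D - 1 ≠ 0 by omega)).mp this.symm
      linear_combination this
    rw [← haw, ← hbw, hab]
  -- obtain the unique root α
  obtain ⟨α₀, hα₀⟩ := Complex.exists_root (f := h₁)
    (natDegree_pos_iff_degree_pos.mp hh₁ : (0:WithBot ℕ) < h₁.degree)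
  have hα₀Z : α₀ ∈ Z := (hmemZ α₀).mpr hα₀
  obtain ⟨a, haZ, hSα, hSa⟩ := hsingle α₀ hα₀Z
  have haα : a = α₀ := hZone a haZ α₀ hα₀Z
  subst haα
  set α := a with hαdef
  -- now S = C α + C c * (X - C α)^D, S(α) = α
  -- Chebyshev side
  obtain ⟨hpm, hpdeg, hpfun⟩ := cheb_iter (show 0 < d by omega) hT n
  set p : Polynomial ℂ := iterComp T n with hpdef
  set β : ℂ := h₂.eval α with hβdef
  have hfixβ : p.eval β = β := by
    have h := congrArg (eval α) e₂
    rw [eval_comp, eval_comp, hSa] at h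
    exact h
  have hq0 : h₂ - C β ≠ 0 := by
    intro h
    rw [sub_eq_zero] at h
    rw [h, natDegree_C] at hh₂
    omega
  have hp0 : p - C β ≠ 0 := by
    intro h
    rw [sub_eq_zero] at h
    have := congrArg natDegree h
    rw [hpdeg, natDegree_C] at this
    omega
  set e : ℕ := rootMultiplicity α (h₂ - C β) with hedef
  have he1 : 0 < e := (rootMultiplicity_pos hq0).mpr (by simp [IsRoot, hβdef])
  set v : Polynomial ℂ := (h₂ - C β) /ₘ (X - C α) ^ e with hvdef
  have hv : (X - C α) ^ e * v = h₂ - C β := pow_mul_divByMonic_rootMultiplicity_eq _ _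
  have hvα : v.eval α ≠ 0 := eval_divByMonic_pow_rootMultiplicity_ne_zero α hq0
  set m : ℕ := rootMultiplicity β (p - C β) with hmdef
  set u : Polynomial ℂ := (p - C β) /ₘ (X - C β) ^ m with hudef
  have hu : (X - C β) ^ m * u = p - C β := pow_mul_divByMonic_rootMultiplicity_eq _ _
  have huβ : u.eval β ≠ 0 := eval_divByMonic_pow_rootMultiplicity_ne_zero β hp0
  have hL : p.comp h₂ - C β = (X - C α) ^ (e * m) * (v ^ m * u.comp h₂) := by
    calc p.comp h₂ - C β = (p - C β).comp h₂ := by rw [sub_comp, C_comp]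
      _ = ((X - C β) ^ m * u).comp h₂ := by rw [hu]
      _ = (h₂ - C β) ^ m * u.comp h₂ := by rw [mul_comp, pow_comp, sub_comp, X_comp, C_comp]
      _ = ((X - C α) ^ e * v) ^ m * u.comp h₂ := by rw [hv]
      _ = (X - C α) ^ (e * m) * (v ^ m * u.comp h₂) := by rw [mul_pow, ← pow_mul]; ring
  have hSform : S - C α = C c * (X - C α) ^ D := hSα
  have hR : h₂.comp S - C β = (X - C α) ^ (D * e) * (C (c ^ e) * v.comp S) := by
    calc h₂.comp S - C β = (h₂ - C β).comp S := by rw [sub_comp, C_comp]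
      _ = ((X - C α) ^ e * v).comp S := by rw [hv]
      _ = (S - C α) ^ e * v.comp S := by rw [mul_comp, pow_comp, sub_comp, X_comp, C_comp]
      _ = (C c * (X - C α) ^ D) ^ e * v.comp S := by rw [hSform]
      _ = (X - C α) ^ (D * e) * (C (c ^ e) * v.comp S) := by
          rw [mul_pow, ← pow_mul, ← C_pow]; ring
  have hbig : (X - C α) ^ (e * m) * (v ^ m * u.comp h₂) =
      (X - C α) ^ (D * e) * (C (c ^ e) * v.comp S) := by
    rw [← hL, ← hR, e₂]
  have hA : (v ^ m * u.comp h₂).eval α ≠ 0 := by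
    rw [eval_mul, eval_pow, eval_comp]
    exact mul_ne_zero (pow_ne_zero _ hvα) (by rw [← hβdef]; exact huβ)
  have hB : (C (c ^ e) * v.comp S).eval α ≠ 0 := by
    rw [eval_mul, eval_C, eval_comp, hSa]
    exact mul_ne_zero (pow_ne_zero _ hc0) hvα
  have h1 : D * e ≤ e * m := aux_pow_le hbig hA
  have h2 : e * m ≤ D * e := aux_pow_le hbig.symm hB
  have hmD : m = D := by
    have h3 : e * m = D * e := le_antisymm h2 h1
    rw [mul_comm D e] at h3
    exact Nat.eq_of_mul_eq_mul_left he1 h3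
  -- p - C β = (X - C β)^D
  have hu0 : u ≠ 0 := by
    intro h
    rw [h, mul_zero] at hu
    exact hp0 hu.symm
  have hndeg : (p - C β).natDegree = D := by rw [natDegree_sub_C, hpdeg]
  have hundeg : u.natDegree = 0 := by
    have h := congrArg natDegree hu
    rw [natDegree_mul (pow_ne_zero _ (X_sub_C_ne_zero β)) hu0, natDegree_pow,
      natDegree_X_sub_C, mul_one, hndeg, hmD] at h
    omega
  have hpmonic : (p - C β).Monic := by
    have : p - C β = p + (-C β) := by ring
    rw [this]
    exact hpm.add_of_left (by
      calc degree (-C β) = degree (C β) := degree_neg _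
        _ ≤ 0 := degree_C_le
        _ < p.degree := by
            apply natDegree_pos_iff_degree_pos.mp
            rw [hpdeg]; omega)
  have huC : u = C (u.coeff 0) := eq_C_of_natDegree_eq_zero hundeg
  have hu1 : u = 1 := by
    have hlcu : (p - C β).leadingCoeff = ((X - C β) ^ m).leadingCoeff * u.leadingCoeff := by
      rw [← hu, leadingCoeff_mul]
    rw [hpmonic.leadingCoeff, ((monic_X_sub_C β).pow m).leadingCoeff, one_mul] at hlcu
    have h5 : u.leadingCoeff = u.coeff 0 := by rw [leadingCoeff, hundeg]
    rw [h5] at hlcu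
    rw [huC, ← hlcu, map_one]
  have hkey : p - C β = (X - C β) ^ D := by
    rw [← hu, hu1, mul_one, hmD]
  -- functional equation contradiction
  have hkeyfun : ∀ z : ℂ, z ≠ 0 → (z + z⁻¹ - β) ^ D + β = z ^ D + (z⁻¹) ^ D := by
    intro z hz
    have h := hpfun z hz
    have h2 : p.eval (z + z⁻¹) = (z + z⁻¹ - β) ^ D + β := by
      have : p = (X - C β) ^ D + C β := by rw [← hkey]; ring
      rw [this]
      simp [eval_pow]
    rw [h2] at h
    exact h
  set G : Polynomial ℂ :=
    (X ^ 2 - C β * X + 1) ^ D + C β * X ^ D - X ^ (2 * D) - 1 with hGdef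
  have hG : G = 0 := by
    apply Polynomial.funext
    intro z
    rw [hGdef]
    simp only [eval_sub, eval_add, eval_mul, eval_pow, eval_X, eval_C, eval_one, eval_zero]
    by_cases hz : z = 0
    · subst hz
      rw [zero_pow hD0, zero_pow (show 2 * D ≠ 0 by omega), zero_pow (show 2 ≠ 0 by omega)]
      ring_nf
    · have key := hkeyfun z hz
      have h1 : z ^ 2 - β * z + 1 = z * (z + z⁻¹ - β) := by
        field_simp
        ring
      have h2 : (z + z⁻¹ - β) ^ D = z ^ D + (z⁻¹) ^ D - β := by
        rw [← key]; ring
      have h3 : z ^ D * (z⁻¹) ^ D = 1 := by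
        rw [← mul_pow, mul_inv_cancel₀ hz, one_pow]
      have h4 : z ^ (2 * D) = z ^ D * z ^ D := by
        rw [two_mul, pow_add]
      rw [h1, mul_pow, h2, h4]
      linear_combination h3
  have hβ0 : β = 0 := by
    have hder : derivative G = 0 := by rw [hG]; simp
    have h := congrArg (eval 0) hder
    rw [hGdef] at h
    rw [derivative_sub, derivative_sub, derivative_add, derivative_one, derivative_pow,
      derivative_mul, derivative_C, derivative_X_pow, derivative_add, derivative_sub,
      derivative_mul, derivative_C, derivative_X, derivative_X_pow, derivative_one,
      derivative_X_pow] at h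
    simp only [eval_sub, eval_add, eval_mul, eval_pow, eval_X, eval_C, eval_one, eval_zero,
      eval_natCast, Polynomial.eval_ofNat] at h
    rw [zero_pow (show D - 1 ≠ 0 by omega), zero_pow (show 2 * D - 1 ≠ 0 by omega),
      zero_pow (show 2 ≠ 0 by omega), zero_pow (show D ≠ 0 by omega)] at h
    push_cast at h
    have : -(D : ℂ) * β = 0 := by linear_combination h
    have hDc : (D : ℂ) ≠ 0 := by exact_mod_cast hD0
    have := mul_eq_zero.mp this
    rcases this with h' | h'
    · exact absurd h' (by simpa using hDc)
    · exact h'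
  have hfinal := congrArg (eval 1) hG
  rw [hGdef, hβ0] at hfinal
  simp only [map_zero, zero_mul, add_zero, eval_sub, eval_add, eval_mul, eval_pow, eval_X,
    eval_C, eval_one, eval_zero, one_pow, mul_one] at hfinal
  have h2D : (2 : ℂ) ^ D = 2 := by
    linear_combination hfinal
  have : ((2 ^ D : ℕ) : ℂ) = ((2 : ℕ) : ℂ) := by push_cast; rw [h2D]
  have h2Dn : 2 ^ D = 2 := Nat.cast_injective this
  have : 4 ≤ 2 ^ D := by
    calc (4:ℕ) = 2 ^ 2 := by norm_num
      _ ≤ 2 ^ D := Nat.pow_le_pow_right (by norm_num) hD2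
  omega
end
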